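/- Let R be a tournament on n vertices and R(a_1,...,a_n) a transitive blowup of R. Then R ∈ D_k if and only if R(a_1,...,a_n) ∈ D_k, where D_k is the class of tournaments all of whose subtournaments have determinant at most k^2. -/

import Mathlib

open scoped Classical

/-- A tournament: irreflexive, and between distinct vertices exactly one arc. -/
def IsTournament {V : Type*} (r : V → V → Prop) : Prop :=
  (∀ i, ¬ r i i) ∧ ∀ i j, i ≠ j → (r i j ↔ ¬ r j i)

/-- Skew-adjacency matrix of a relation. -/
noncomputable def skew {V : Type*} (r : V → V → Prop) : Matrix V V ℤ :=
  Matrix.of fun i j => if r i j then 1 else if r j i then -1 else 0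

/-- Determinant of the skew-adjacency matrix. -/
noncomputable def tdet {V : Type*} [Fintype V] [DecidableEq V] (r : V → V → Prop) : ℤ :=
  (skew r).det

/-- Determinant of the subtournament induced by a finite vertex subset. -/
noncomputable def subdet {V : Type*} [Fintype V] [DecidableEq V] (r : V → V → Prop)
    (s : Finset V) : ℤ :=
  ((skew r).submatrix (fun x : {x // x ∈ s} => x.1) (fun x : {x // x ∈ s} => x.1)).det

/-- Switch of `r` with respect to `W`: arcs between `W` and its complement are reversed. -/
def switchRel {V : Type*} (r : V → V → Prop) (W : Set V) : V → V → Prop :=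
  fun i j => if (i ∈ W ↔ j ∈ W) then r i j else r j i

/-- Switching equivalence of two tournaments on the same vertex set. -/
def SwitchEquiv {V : Type*} (r₁ r₂ : V → V → Prop) : Prop :=
  ∃ W : Set V, ∀ i j, r₂ i j ↔ switchRel r₁ W i j

def IsTransitive {V : Type*} (r : V → V → Prop) : Prop :=
  ∀ a b c, r a b → r b c → r a c

def IsTransitiveOn {V : Type*} (r : V → V → Prop) (X : Finset V) : Prop :=
  ∀ a ∈ X, ∀ b ∈ X, ∀ c ∈ X, r a b → r b c → r a c

/-- A 4-set inducing a diamond: a vertex dominating or dominated by a 3-cycle. -/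
def IsDiamond {V : Type*} (r : V → V → Prop) (X : Finset V) : Prop :=
  ∃ a b c d : V, X = {a, b, c, d} ∧ a ≠ b ∧ a ≠ c ∧ a ≠ d ∧ b ≠ c ∧ b ≠ d ∧ c ≠ d ∧
    r b c ∧ r c d ∧ r d b ∧ ((r a b ∧ r a c ∧ r a d) ∨ (r b a ∧ r c a ∧ r d a))

/-- Number of diamonds of a tournament. -/
noncomputable def numDiamonds {V : Type*} [Fintype V] (r : V → V → Prop) : ℕ :=
  Set.ncard {X : Finset V | IsDiamond r X}

/-- The tournament `L_n`: a transitive chain `u_0 → ⋯ → u_{n-2}` together with a last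
vertex alternating along the chain, starting with `u_{n-1} → u_0`. -/
def LRel (n : ℕ) : Fin n → Fin n → Prop := fun i j =>
  (j.val < n - 1 ∧ i.val < j.val) ∨
  (j.val = n - 1 ∧ i.val < n - 1 ∧ i.val % 2 = 1) ∨
  (i.val = n - 1 ∧ j.val < n - 1 ∧ j.val % 2 = 0)

/-- Join of two tournaments: all arcs from the first to the second. -/
def joinRel {A B : Type*} (r : A → A → Prop) (s : B → B → Prop) : A ⊕ B → A ⊕ B → Prop :=
  fun x y => match x, y with
  | .inl a, .inl a' => r a a'
  | .inr b, .inr b' => s b b'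
  | .inl _, .inr _ => True
  | .inr _, .inl _ => False

/-- `T⁺`: add one new vertex dominated by every vertex of `T`. -/
def plusRel {A : Type*} (r : A → A → Prop) : Option A → Option A → Prop :=
  fun x y => match x, y with
  | some a, some b => r a b
  | some _, none => True
  | _, _ => False

/-- Blowup of `r` by the family of tournaments `t`. -/
def blowupG {ι : Type*} [DecidableEq ι] (r : ι → ι → Prop) {κ : ι → Type*}
    (t : ∀ i, κ i → κ i → Prop) : (Σ i, κ i) → (Σ i, κ i) → Prop :=
  fun x y => if h : x.1 = y.1 then t y.1 (h ▸ x.2) y.2 else r x.1 y.1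

/-- Transitive `(a_1,…,a_n)`-blowup of `r`. -/
def blowup {ι : Type*} [DecidableEq ι] (r : ι → ι → Prop) (a : ι → ℕ) :
    (Σ i, Fin (a i)) → (Σ i, Fin (a i)) → Prop :=
  blowupG r (fun _ p q => p < q)

/-- Membership in `𝒟_k`: every subtournament has determinant at most `k²`. -/
def memD {V : Type*} [Fintype V] [DecidableEq V] (r : V → V → Prop) (k : ℕ) : Prop :=
  ∀ s : Finset V, subdet r s ≤ (k : ℤ) ^ 2

section Aux

open Matrix

/-- Relabelling lemma: matching entries under a bijection give equal subdets. -/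
lemma subdet_relabel {V W : Type*} [Fintype V] [DecidableEq V] [Fintype W] [DecidableEq W]
    (r : V → V → Prop) (r' : W → W → Prop) (s : Finset V) (t : Finset W)
    (e : {x // x ∈ s} ≃ {y // y ∈ t})
    (h : ∀ x y : {x // x ∈ s}, skew r x.1 y.1 = skew r' (e x).1 (e y).1) :
    subdet r s = subdet r' t := by
  unfold subdet
  rw [← Matrix.det_submatrix_equiv_self e]
  congr 1
  ext x y
  simp only [Matrix.submatrix_apply]
  exact h x y

lemma det_minor_row {n : Type*} [Fintype n] [DecidableEq n] (M : Matrix n n ℤ) (u : n)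
    (h : ∀ j, M u j = if j = u then 1 else 0) :
    M.det = (M.submatrix (fun w : {w : n // ¬ w = u} => (w.1 : n))
      (fun w : {w : n // ¬ w = u} => (w.1 : n))).det := by
  classical
  let e : {w : n // w = u} ⊕ {w : n // ¬ w = u} ≃ n := Equiv.sumCompl (· = u)
  haveI : Unique {w : n // w = u} := ⟨⟨⟨u, rfl⟩⟩, fun w => Subtype.ext w.2⟩
  rw [← Matrix.det_submatrix_equiv_self e M]
  rw [← Matrix.fromBlocks_toBlocks (M.submatrix e e)]
  have hB : (M.submatrix e e).toBlocks₁₂ = 0 := by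
    ext i j
    have hi : (e (Sum.inl i) : n) = u := i.2
    have hj : (e (Sum.inr j) : n) ≠ u := j.2
    simp only [Matrix.toBlocks₁₂, Matrix.of_apply, Matrix.submatrix_apply, Matrix.zero_apply]
    rw [hi, h, if_neg hj]
  rw [hB, Matrix.det_fromBlocks_zero₁₂]
  have hA : (M.submatrix e e).toBlocks₁₁.det = 1 := by
    rw [Matrix.det_unique]
    have : (e (Sum.inl (default : {w : n // w = u})) : n) = u := (default : {w : n // w = u}).2
    simp only [Matrix.toBlocks₁₁, Matrix.of_apply, Matrix.submatrix_apply]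
    rw [this, h, if_pos rfl]
  rw [hA, one_mul]
  congr 1

lemma det_minor_col {n : Type*} [Fintype n] [DecidableEq n] (M : Matrix n n ℤ) (v : n)
    (h : ∀ i, M i v = if i = v then 1 else 0) :
    M.det = (M.submatrix (fun w : {w : n // ¬ w = v} => (w.1 : n))
      (fun w : {w : n // ¬ w = v} => (w.1 : n))).det := by
  classical
  let e : {w : n // w = v} ⊕ {w : n // ¬ w = v} ≃ n := Equiv.sumCompl (· = v)
  haveI : Unique {w : n // w = v} := ⟨⟨⟨v, rfl⟩⟩, fun w => Subtype.ext w.2⟩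
  rw [← Matrix.det_submatrix_equiv_self e M]
  rw [← Matrix.fromBlocks_toBlocks (M.submatrix e e)]
  have hC : (M.submatrix e e).toBlocks₂₁ = 0 := by
    ext i j
    have hj : (e (Sum.inl j) : n) = v := j.2
    have hi : (e (Sum.inr i) : n) ≠ v := i.2
    simp only [Matrix.toBlocks₂₁, Matrix.of_apply, Matrix.submatrix_apply, Matrix.zero_apply]
    rw [hj, h, if_neg hi]
  rw [hC, Matrix.det_fromBlocks_zero₂₁]
  have hA : (M.submatrix e e).toBlocks₁₁.det = 1 := by
    rw [Matrix.det_unique]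
    have : (e (Sum.inl (default : {w : n // w = v})) : n) = v := (default : {w : n // w = v}).2
    simp only [Matrix.toBlocks₁₁, Matrix.of_apply, Matrix.submatrix_apply]
    rw [this, h, if_pos rfl]
  rw [hA, one_mul]
  congr 1

/-- Removing a "twin pair" keeps the subdeterminant. -/
lemma subdet_pair {V : Type*} [Fintype V] [DecidableEq V] (R : V → V → Prop) (s : Finset V)
    (u v : V) (hu : u ∈ s) (hv : v ∈ s) (huv : u ≠ v)
    (h1 : skew R u u = 0) (h2 : skew R u v = 1) (h3 : skew R v u = -1) (h4 : skew R v v = 0)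
    (hrow : ∀ w ∈ s, w ≠ u → w ≠ v → skew R u w = skew R v w)
    (hcol : ∀ w ∈ s, w ≠ u → w ≠ v → skew R w u = skew R w v) :
    subdet R s = subdet R ((s.erase u).erase v) := by
  classical
  set M : Matrix {x // x ∈ s} {x // x ∈ s} ℤ :=
    (skew R).submatrix (fun x : {x // x ∈ s} => x.1) (fun x : {x // x ∈ s} => x.1) with hM
  have hMdef : ∀ x y : {x // x ∈ s}, M x y = skew R x.1 y.1 := fun _ _ => rfl
  set u0 : {x // x ∈ s} := ⟨u, hu⟩
  set v0 : {x // x ∈ s} := ⟨v, hv⟩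
  have huv0 : u0 ≠ v0 := fun hh => huv (congrArg Subtype.val hh)
  set M1 : Matrix {x // x ∈ s} {x // x ∈ s} ℤ := M.updateRow u0 (M u0 + (-1 : ℤ) • M v0) with hM1
  set M2 : Matrix {x // x ∈ s} {x // x ∈ s} ℤ :=
    M1.updateCol v0 (fun k => M1 k v0 + (-1 : ℤ) • M1 k u0) with hM2
  have hd1 : M.det = M1.det := (Matrix.det_updateRow_add_smul_self M huv0 (-1)).symm
  have hd2 : M1.det = M2.det :=
    (Matrix.det_updateCol_add_smul_self M1 huv0.symm (-1)).symm
  -- values of M1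
  have hM1u : ∀ j, M1 u0 j = M u0 j - M v0 j := by
    intro j; rw [hM1, Matrix.updateRow_self]; simp [sub_eq_add_neg]
  have hM1ne : ∀ i j, i ≠ u0 → M1 i j = M i j := by
    intro i j hi; rw [hM1, Matrix.updateRow_ne hi]
  -- row u0 of M2 is a single 1 at u0
  have hrowu : ∀ j, M2 u0 j = if j = u0 then 1 else 0 := by
    intro j
    by_cases hju : j = u0
    · subst hju
      rw [hM2, Matrix.updateCol_ne huv0, if_pos rfl, hM1u]
      rw [hMdef, hMdef, h1, h3]; simp
    · rw [if_neg hju]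
      by_cases hjv : j = v0
      · subst hjv
        rw [hM2, Matrix.updateCol_self]
        rw [hM1u, hM1u, hMdef, hMdef, hMdef, hMdef, h1, h2, h3, h4]; simp
      · rw [hM2, Matrix.updateCol_ne hjv, hM1u, hMdef, hMdef]
        have hju' : j.1 ≠ u := fun hh => hju (Subtype.ext hh)
        have hjv' : j.1 ≠ v := fun hh => hjv (Subtype.ext hh)
        rw [hrow j.1 j.2 hju' hjv']; simp [v0]
  have step1 := det_minor_row M2 u0 hrowu
  set N : Matrix {w : {x // x ∈ s} // ¬ w = u0} {w : {x // x ∈ s} // ¬ w = u0} ℤ :=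
    M2.submatrix (fun w => w.1) (fun w => w.1) with hN
  set v1 : {w : {x // x ∈ s} // ¬ w = u0} := ⟨v0, fun hh => huv0 hh.symm⟩
  have hcolv : ∀ i, N i v1 = if i = v1 then 1 else 0 := by
    intro i
    have hN2 : N i v1 = M2 i.1 v0 := rfl
    by_cases hiv : i = v1
    · subst hiv
      rw [if_pos rfl, hN2, hM2, Matrix.updateCol_self]
      rw [hM1ne _ _ (fun hh => huv0 hh.symm), hM1ne _ _ (fun hh => huv0 hh.symm),
        hMdef, hMdef, h4, h3]; simp
    · rw [if_neg hiv, hN2]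
      have hinu : i.1 ≠ u0 := i.2
      have hinv : i.1 ≠ v0 := fun hh => hiv (Subtype.ext hh)
      rw [hM2, Matrix.updateCol_self, hM1ne _ _ hinu, hM1ne _ _ hinu, hMdef, hMdef]
      have h1' : i.1.1 ≠ u := fun hh => hinu (Subtype.ext hh)
      have h2' : i.1.1 ≠ v := fun hh => hinv (Subtype.ext hh)
      rw [hcol i.1.1 i.1.2 h1' h2']; simp [v0]
  have step2 := det_minor_col N v1 hcolv
  -- assemble
  have hsub : subdet R s = (N.submatrix
      (fun w : {w : {w : {x // x ∈ s} // ¬ w = u0} // ¬ w = v1} => w.1)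
      (fun w : {w : {w : {x // x ∈ s} // ¬ w = u0} // ¬ w = v1} => w.1)).det := by
    have : subdet R s = M.det := rfl
    rw [this, hd1, hd2, step1]
    exact step2
  rw [hsub]
  -- now identify with subdet on the double erase
  unfold subdet
  let e : {w : {w : {x // x ∈ s} // ¬ w = u0} // ¬ w = v1} ≃
      {x // x ∈ (s.erase u).erase v} :=
    { toFun := fun w => ⟨w.1.1.1, by
        rw [Finset.mem_erase, Finset.mem_erase]
        exact ⟨fun hh => w.2 (Subtype.ext (Subtype.ext hh)),
          fun hh => w.1.2 (Subtype.ext hh), w.1.1.2⟩⟩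
      invFun := fun x => ⟨⟨⟨x.1, Finset.mem_of_mem_erase (Finset.mem_of_mem_erase x.2)⟩,
        fun hh => (Finset.ne_of_mem_erase (Finset.mem_of_mem_erase x.2))
          (congrArg Subtype.val hh)⟩,
        fun hh => (Finset.ne_of_mem_erase x.2)
          (congrArg Subtype.val (congrArg Subtype.val hh))⟩
      left_inv := fun w => rfl
      right_inv := fun x => rfl }
  rw [← Matrix.det_submatrix_equiv_self e ((skew R).submatrix
      (fun x : {x // x ∈ (s.erase u).erase v} => x.1) (fun x => x.1))]
  congr 1
  ext w w'
  simp only [Matrix.submatrix_apply]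
  have hx : (w.1.1 : {x // x ∈ s}) ≠ u0 := w.1.2
  have hy : (w'.1.1 : {x // x ∈ s}) ≠ v0 := fun hh => w'.2 (Subtype.ext hh)
  have hNe : N w.1 w'.1 = M2 w.1.1 w'.1.1 := rfl
  rw [hNe, hM2, Matrix.updateCol_ne hy, hM1ne _ _ hx, hMdef]
  rfl

/-- Elements of a blob present in `s`. -/
noncomputable def gset {V : Type*} [DecidableEq V] (a : V → ℕ)
    (s : Finset (Σ i, Fin (a i))) (i : V) : Finset (Fin (a i)) :=
  Finset.univ.filter (fun p => (⟨i, p⟩ : Σ j, Fin (a j)) ∈ s)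

lemma mem_gset {V : Type*} [DecidableEq V] (a : V → ℕ) (s : Finset (Σ i, Fin (a i)))
    (i : V) (p : Fin (a i)) : p ∈ gset a s i ↔ (⟨i, p⟩ : Σ j, Fin (a j)) ∈ s := by
  simp [gset]

lemma blowup_same {V : Type*} [DecidableEq V] (r : V → V → Prop) (a : V → ℕ)
    (i : V) (p q : Fin (a i)) : blowup r a ⟨i, p⟩ ⟨i, q⟩ ↔ p < q := by
  simp [blowup, blowupG]

lemma blowup_ne {V : Type*} [DecidableEq V] (r : V → V → Prop) (a : V → ℕ)
    {x y : Σ i, Fin (a i)} (h : x.1 ≠ y.1) : blowup r a x y ↔ r x.1 y.1 := by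
  simp [blowup, blowupG, h]

lemma skew_blowup_ne {V : Type*} [DecidableEq V] (r : V → V → Prop) (a : V → ℕ)
    {x y : Σ i, Fin (a i)} (h : x.1 ≠ y.1) :
    skew (blowup r a) x y = skew r x.1 y.1 := by
  have h1 : blowup r a x y ↔ r x.1 y.1 := blowup_ne r a h
  have h2 : blowup r a y x ↔ r y.1 x.1 := blowup_ne r a h.symm
  show (if blowup r a x y then (1:ℤ) else if blowup r a y x then -1 else 0)
    = (if r x.1 y.1 then (1:ℤ) else if r y.1 x.1 then -1 else 0)
  by_cases hxy : r x.1 y.1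
  · rw [if_pos (h1.mpr hxy), if_pos hxy]
  · rw [if_neg (fun hh => hxy (h1.mp hh)), if_neg hxy]
    by_cases hyx : r y.1 x.1
    · rw [if_pos (h2.mpr hyx), if_pos hyx]
    · rw [if_neg (fun hh => hyx (h2.mp hh)), if_neg hyx]

lemma skew_blowup_same {V : Type*} [DecidableEq V] (r : V → V → Prop) (a : V → ℕ)
    (i : V) (p q : Fin (a i)) :
    skew (blowup r a) ⟨i, p⟩ ⟨i, q⟩ = if p < q then 1 else if q < p then -1 else 0 := by
  have h1 := blowup_same r a i p q
  have h2 := blowup_same r a i q p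
  show (if blowup r a ⟨i,p⟩ ⟨i,q⟩ then (1:ℤ) else if blowup r a ⟨i,q⟩ ⟨i,p⟩ then -1 else 0) = _
  by_cases hpq : p < q
  · rw [if_pos (h1.mpr hpq), if_pos hpq]
  · rw [if_neg (fun hh => hpq (h1.mp hh)), if_neg hpq]
    by_cases hqp : q < p
    · rw [if_pos (h2.mpr hqp), if_pos hqp]
    · rw [if_neg (fun hh => hqp (h2.mp hh)), if_neg hqp]

/-- Key determinant collapse: the subdeterminant of a blowup equals the subdeterminant of the
base tournament on the blobs met an odd number of times. -/
lemma subdet_blowup {V : Type*} [Fintype V] [DecidableEq V] (r : V → V → Prop)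
    (hT : IsTournament r) (a : V → ℕ) (s : Finset (Σ i, Fin (a i))) :
    subdet (blowup r a) s = subdet r (Finset.univ.filter fun i => Odd (gset a s i).card) := by
  classical
  induction s using Finset.strongInduction with
  | _ s ih =>
  by_cases hbase : ∀ i, (gset a s i).card ≤ 1
  · -- base case: at most one vertex per blob
    have hinj : ∀ x y : {x // x ∈ s}, x.1.1 = y.1.1 → x = y := by
      rintro ⟨⟨i, p⟩, hx⟩ ⟨⟨j, q⟩, hy⟩ (h : i = j)
      subst h
      have hp : p ∈ gset a s i := (mem_gset a s i p).mpr hx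
      have hq : q ∈ gset a s i := (mem_gset a s i q).mpr hy
      have : p = q := Finset.card_le_one.mp (hbase i) p hp q hq
      subst this; rfl
    have himg : (Finset.univ.filter fun i => Odd (gset a s i).card) = s.image Sigma.fst := by
      ext i
      simp only [Finset.mem_filter, Finset.mem_univ, true_and, Finset.mem_image]
      constructor
      · rintro hodd
        have h1 : (gset a s i).card = 1 := by
          rcases hodd with ⟨m, hm⟩
          have := hbase i
          omega
        obtain ⟨p, hp⟩ := Finset.card_eq_one.mp h1
        refine ⟨⟨i, p⟩, (mem_gset a s i p).mp (hp ▸ Finset.mem_singleton_self p), rfl⟩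
      · rintro ⟨⟨j, p⟩, hx, rfl⟩
        have hp : p ∈ gset a s j := (mem_gset a s j p).mpr hx
        have h1 : (gset a s j).card = 1 :=
          le_antisymm (hbase j) (Finset.card_pos.mpr ⟨p, hp⟩)
        rw [h1]; exact odd_one
    rw [himg]
    have hbij : Function.Bijective
        (fun x : {x // x ∈ s} => (⟨x.1.1, Finset.mem_image_of_mem Sigma.fst x.2⟩ :
          {y // y ∈ s.image Sigma.fst})) := by
      constructor
      · intro x y hxy
        exact hinj x y (congrArg Subtype.val hxy)
      · rintro ⟨i, hi⟩
        obtain ⟨x, hx, rfl⟩ := Finset.mem_image.mp hi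
        exact ⟨⟨x, hx⟩, rfl⟩
    refine subdet_relabel (blowup r a) r s (s.image Sigma.fst) (Equiv.ofBijective _ hbij) ?_
    intro x y
    by_cases hxy : x.1.1 = y.1.1
    · have : x = y := hinj x y hxy
      subst this
      have hl : skew (blowup r a) x.1 x.1 = 0 := by
        show (if blowup r a x.1 x.1 then (1:ℤ) else if blowup r a x.1 x.1 then -1 else 0) = 0
        have : ¬ blowup r a x.1 x.1 := by
          simp [blowup, blowupG, lt_irrefl]
        rw [if_neg this, if_neg this]
      have hr : skew r x.1.1 x.1.1 = 0 := by
        show (if r x.1.1 x.1.1 then (1:ℤ) else if r x.1.1 x.1.1 then -1 else 0) = 0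
        rw [if_neg (hT.1 _), if_neg (hT.1 _)]
      exact hl.trans hr.symm
    · exact skew_blowup_ne r a hxy
  · -- inductive step: some blob has two vertices; remove the two least
    push_neg at hbase
    obtain ⟨i, hi2⟩ := hbase
    have hi2' : 2 ≤ (gset a s i).card := hi2
    have hne : (gset a s i).Nonempty := Finset.card_pos.mp (by omega)
    set F := gset a s i with hF
    set u := F.min' hne with hu
    have huF : u ∈ F := F.min'_mem hne
    have hne2 : (F.erase u).Nonempty := by
      rw [← Finset.card_pos, Finset.card_erase_of_mem huF]; omega
    set v := (F.erase u).min' hne2 with hv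
    have hvF' : v ∈ F.erase u := (F.erase u).min'_mem hne2
    have hvF : v ∈ F := Finset.mem_of_mem_erase hvF'
    have hvu : v ≠ u := Finset.ne_of_mem_erase hvF'
    have huv : u < v := lt_of_le_of_ne (F.min'_le v hvF) (Ne.symm hvu)
    have hother : ∀ w ∈ F, w ≠ u → w ≠ v → v < w := by
      intro w hw hwu hwv
      have : v ≤ w := (F.erase u).min'_le w (Finset.mem_erase.mpr ⟨hwu, hw⟩)
      exact lt_of_le_of_ne this (Ne.symm hwv)
    set U : Σ j, Fin (a j) := ⟨i, u⟩ with hU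
    set W : Σ j, Fin (a j) := ⟨i, v⟩ with hW
    have hUs : U ∈ s := (mem_gset a s i u).mp huF
    have hWs : W ∈ s := (mem_gset a s i v).mp hvF
    have hUW : U ≠ W := by
      intro hh
      have := (Sigma.mk.inj_iff.mp hh).2
      exact (ne_of_lt huv) (eq_of_heq this)
    have hdiagU : skew (blowup r a) U U = 0 := by
      rw [hU, skew_blowup_same]
      rw [if_neg (lt_irrefl u), if_neg (lt_irrefl u)]
    have hdiagW : skew (blowup r a) W W = 0 := by
      rw [hW, skew_blowup_same]
      rw [if_neg (lt_irrefl v), if_neg (lt_irrefl v)]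
    have hUV1 : skew (blowup r a) U W = 1 := by
      rw [hU, hW, skew_blowup_same, if_pos huv]
    have hVU1 : skew (blowup r a) W U = -1 := by
      rw [hU, hW, skew_blowup_same, if_neg (asymm huv), if_pos huv]
    have hrows : ∀ w ∈ s, w ≠ U → w ≠ W →
        skew (blowup r a) U w = skew (blowup r a) W w := by
      rintro ⟨j, p⟩ hws hwu hwv
      by_cases hji : j = i
      · subst hji
        have hpu : p ≠ u := fun hh => hwu (by rw [hh])
        have hpv : p ≠ v := fun hh => hwv (by rw [hh])
        have hpF : p ∈ F := (mem_gset a s j p).mpr hws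
        have hvp : v < p := hother p hpF hpu hpv
        have hup : u < p := lt_trans huv hvp
        rw [hU, hW, skew_blowup_same, skew_blowup_same, if_pos hup, if_pos hvp]
      · have h1 : i ≠ j := fun hh => hji hh.symm
        rw [skew_blowup_ne r a (show U.1 ≠ (⟨j,p⟩ : Σ l, Fin (a l)).1 from h1),
          skew_blowup_ne r a (show W.1 ≠ (⟨j,p⟩ : Σ l, Fin (a l)).1 from h1)]
    have hcols : ∀ w ∈ s, w ≠ U → w ≠ W →
        skew (blowup r a) w U = skew (blowup r a) w W := by
      rintro ⟨j, p⟩ hws hwu hwv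
      by_cases hji : j = i
      · subst hji
        have hpu : p ≠ u := fun hh => hwu (by rw [hh])
        have hpv : p ≠ v := fun hh => hwv (by rw [hh])
        have hpF : p ∈ F := (mem_gset a s j p).mpr hws
        have hvp : v < p := hother p hpF hpu hpv
        have hup : u < p := lt_trans huv hvp
        rw [hU, hW, skew_blowup_same, skew_blowup_same,
          if_neg (asymm hup), if_pos hup, if_neg (asymm hvp), if_pos hvp]
      · have h1 : j ≠ i := hji
        rw [skew_blowup_ne r a (show (⟨j,p⟩ : Σ l, Fin (a l)).1 ≠ U.1 from h1),
          skew_blowup_ne r a (show (⟨j,p⟩ : Σ l, Fin (a l)).1 ≠ W.1 from h1)]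
    have key := subdet_pair (blowup r a) s U W hUs hWs hUW hdiagU hUV1 hVU1 hdiagW hrows hcols
    have hWs' : W ∈ s.erase U := Finset.mem_erase.mpr ⟨Ne.symm hUW, hWs⟩
    have hss : (s.erase U).erase W ⊂ s :=
      lt_of_le_of_lt (Finset.erase_subset W (s.erase U)) (Finset.erase_ssubset hUs)
    rw [key, ih _ hss]
    congr 1
    ext j
    simp only [Finset.mem_filter, Finset.mem_univ, true_and]
    by_cases hji : j = i
    · subst hji
      have hg : gset a ((s.erase U).erase W) j = (F.erase u).erase v := by
        ext p
        rw [hF]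
        simp only [mem_gset, Finset.mem_erase]
        constructor
        · rintro ⟨h1, h2, h3⟩
          exact ⟨fun hh => h1 (by rw [hh]), fun hh => h2 (by rw [hh]), h3⟩
        · rintro ⟨h1, h2, h3⟩
          refine ⟨fun hh => ?_, fun hh => ?_, h3⟩
          · exact h1 (eq_of_heq (Sigma.mk.inj_iff.mp hh).2)
          · exact h2 (eq_of_heq (Sigma.mk.inj_iff.mp hh).2)
      rw [hg, Finset.card_erase_of_mem (Finset.mem_erase.mpr ⟨hvu, hvF⟩),
        Finset.card_erase_of_mem huF]
      have hFc : 2 ≤ F.card := hi2'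
      rw [← hF, Nat.odd_iff, Nat.odd_iff]
      omega
    · have hg : gset a ((s.erase U).erase W) j = gset a s j := by
        ext p
        simp only [mem_gset, Finset.mem_erase]
        constructor
        · rintro ⟨h1, h2, h3⟩; exact h3
        · intro h3
          refine ⟨fun hh => hji ?_, fun hh => hji ?_, h3⟩
          · exact (Sigma.mk.inj_iff.mp hh).1
          · exact (Sigma.mk.inj_iff.mp hh).1
      rw [hg]

end Aux

theorem stmt14 {V : Type*} [Fintype V] [DecidableEq V] (r : V → V → Prop)
    (hT : IsTournament r) (a : V → ℕ) (ha : ∀ i, 0 < a i) (k : ℕ) (hk : Odd k) :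
    memD r k ↔ memD (blowup r a) k := by
  constructor
  · intro h s
    rw [subdet_blowup r hT a s]
    exact h _
  · intro h s
    set f : V → Σ i, Fin (a i) := fun i => ⟨i, ⟨0, ha i⟩⟩ with hf
    have hbij : Function.Bijective (fun x : {x // x ∈ s} =>
        (⟨f x.1, Finset.mem_image_of_mem f x.2⟩ : {y // y ∈ s.image f})) := by
      constructor
      · intro x y hxy
        have h1 : f x.1 = f y.1 := congrArg Subtype.val hxy
        exact Subtype.ext (Sigma.mk.inj_iff.mp h1).1
      · rintro ⟨y, hy⟩
        obtain ⟨x, hx, rfl⟩ := Finset.mem_image.mp hy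
        exact ⟨⟨x, hx⟩, rfl⟩
    have hrel := subdet_relabel r (blowup r a) s (s.image f) (Equiv.ofBijective _ hbij) ?_
    · rw [hrel]; exact h _
    · intro x y
      by_cases hxy : x.1 = y.1
      · have hxy' : x = y := Subtype.ext hxy
        subst hxy'
        have hl : skew r x.1 x.1 = 0 := by
          show (if r x.1 x.1 then (1:ℤ) else if r x.1 x.1 then -1 else 0) = 0
          rw [if_neg (hT.1 _), if_neg (hT.1 _)]
        have hr2 : skew (blowup r a) (f x.1) (f x.1) = 0 := by
          show (if blowup r a (f x.1) (f x.1) then (1:ℤ)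
            else if blowup r a (f x.1) (f x.1) then -1 else 0) = 0
          have hb : ¬ blowup r a (f x.1) (f x.1) := by
            simp [blowup, blowupG, hf]
          rw [if_neg hb, if_neg hb]
        exact hl.trans hr2.symm
      · exact (skew_blowup_ne r a (show (f x.1).1 ≠ (f y.1).1 from hxy)).symm
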